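/- In a multiplicity-free semi-simple tensor system over a commutative ring R, fix an L-tuple λ̃ = (λ_1,…,λ_L), an element ν ∈ I, and 2 ≤ i ≤ L−1. If ν acts one-dimensionally on the right of λ_{i-1}, then for every ν' ∈ I one has, as operators on H_{λ̃}, p_i^{(ν)} p_{i-1}^{(ν')} p_i^{(ν)} = (F^{λ_{i-1}λ_iλ_{i+1}}_{φ^r_ν(λ_{i-1})})^{ν'}_ν (F̄^{λ_{i-1}λ_iλ_{i+1}}_{φ^r_ν(λ_{i-1})})^ν_{ν'} · p_i^{(ν)}. -/

import Mathlib

open scoped Classical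
open Fin.NatCast

noncomputable section

/-- A multiplicity-free semi-simple tensor system over a commutative ring `R`,
with index set `I`, fusion constants `N`, and F-moves `F`, `Fbar`.
`F a b c d e f` denotes `(F^{abc}_d)^e_f` and `Fbar a b c d f e` denotes `(F̄^{abc}_d)^f_e`. -/
structure TensorSystem (R : Type*) [CommRing R] (I : Type*) where
  N : I → I → I → ℕ
  F : I → I → I → I → I → I → R
  Fbar : I → I → I → I → I → I → R
  N_le_one : ∀ a b c, N a b c ≤ 1
  N_assoc : ∀ a b c d, (∑ᶠ e, N a b e * N e c d) = ∑ᶠ e, N a e d * N b c e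
  N_finite : ∀ a b, (Function.support fun c => N a b c).Finite
  F_vanish : ∀ a b c d e f, N a b e * N b c f * N a f d * N e c d = 0 → F a b c d e f = 0
  Fbar_vanish : ∀ a b c d e f, N a b e * N b c f * N a f d * N e c d = 0 → Fbar a b c d f e = 0
  pentagon : ∀ a b c d e f g k l,
      (∑ᶠ h, F a b c g f h * F a h d e g k * F b c d k h l) = F f c d e g l * F a b l e f k
  F_Fbar : ∀ a b c d e e',
      (∑ᶠ f, F a b c d e f * Fbar a b c d f e')
        = (if e = e' then (1 : R) else 0) * (N a b e : R) * (N e c d : R)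
  Fbar_F : ∀ a b c d f f',
      (∑ᶠ e, Fbar a b c d f' e * F a b c d e f)
        = (if f = f' then (1 : R) else 0) * (N b c f : R) * (N a f d : R)

namespace TensorSystem

variable {R : Type*} [CommRing R] {I : Type*}

/-- `μ = (μ₀, μ₁, …, μ_L)` is a fusion path for the tuple `λ̃ = (lam 1, …, lam L)`:
`μ₀ ∈ I0` and `N_{μ_{i-1} λ_i}^{μ_i} = 1` for `1 ≤ i ≤ L`. -/
def IsPath (TS : TensorSystem R I) (L : ℕ) (I0 : Set I) (lam : ℕ → I)
    (μ : Fin (L + 1) → I) : Prop :=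
  μ 0 ∈ I0 ∧ ∀ i : ℕ, 1 ≤ i → i ≤ L →
    TS.N (μ ((i - 1 : ℕ) : Fin (L + 1))) (lam i) (μ ((i : ℕ) : Fin (L + 1))) = 1

/-- Matrix element `⟨μ'| p_i^{(ν)} |μ⟩` of the two-site projection operator. -/
def pMat (TS : TensorSystem R I) (L : ℕ) (lam : ℕ → I) (i : ℕ) (ν : I)
    (μ' μ : Fin (L + 1) → I) : R :=
  (∏ j ∈ Finset.univ.erase ((i : ℕ) : Fin (L + 1)), if μ j = μ' j then (1 : R) else 0)
    * TS.Fbar (μ ((i - 1 : ℕ) : Fin (L + 1))) (lam i) (lam (i + 1))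
        (μ ((i + 1 : ℕ) : Fin (L + 1))) ν (μ' ((i : ℕ) : Fin (L + 1)))
    * TS.F (μ ((i - 1 : ℕ) : Fin (L + 1))) (lam i) (lam (i + 1))
        (μ ((i + 1 : ℕ) : Fin (L + 1))) (μ ((i : ℕ) : Fin (L + 1))) ν

/-- Matrix elements of the composition of two operators on `H_{λ̃}`,
summing over the fusion-path basis. -/
def mulMat (TS : TensorSystem R I) (L : ℕ) (I0 : Set I) (lam : ℕ → I)
    (A B : (Fin (L + 1) → I) → (Fin (L + 1) → I) → R)
    (μ' μ : Fin (L + 1) → I) : R :=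
  ∑ᶠ μ'' ∈ {x : Fin (L + 1) → I | TS.IsPath L I0 lam x}, A μ' μ'' * B μ'' μ

/-- Two operators on `H_{λ̃}` are equal iff all their matrix elements between
fusion-path basis vectors agree. -/
def MatEqOn (TS : TensorSystem R I) (L : ℕ) (I0 : Set I) (lam : ℕ → I)
    (A B : (Fin (L + 1) → I) → (Fin (L + 1) → I) → R) : Prop :=
  ∀ μ' μ : Fin (L + 1) → I, TS.IsPath L I0 lam μ' → TS.IsPath L I0 lam μ → A μ' μ = B μ' μ

/-- Extended fusion numbers `N_{a a₁ ⋯ aₙ}^b` along a list `[a₁, …, aₙ]`. -/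
def Nseq (TS : TensorSystem R I) : I → List I → I → ℕ
  | a, [], b => if a = b then 1 else 0
  | a, c :: rest, b => ∑ᶠ x, TS.N a c x * Nseq TS x rest b

/-- `ν` acts one-dimensionally on the left of `μ`. -/
def ActsOneDimLeft (TS : TensorSystem R I) (ν μ : I) : Prop :=
  (∑ᶠ μ' : I, TS.N ν μ μ') = 1

/-- `ν` acts one-dimensionally on the right of `μ`. -/
def ActsOneDimRight (TS : TensorSystem R I) (ν μ : I) : Prop :=
  (∑ᶠ μ' : I, TS.N μ ν μ') = 1

end TensorSystem

/-- Matrix elements of the identity operator. -/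
def deltaMat {R : Type*} [CommRing R] {I : Type*} (L : ℕ)
    (μ' μ : Fin (L + 1) → I) : R :=
  ∏ j : Fin (L + 1), if μ j = μ' j then (1 : R) else 0

/-- Scalar multiple of a matrix of operator matrix elements. -/
def smulMat {R : Type*} [CommRing R] {α : Sort*} (c : R) (A : α → α → R) : α → α → R :=
  fun x y => c * A x y


namespace TensorSystem

variable {R : Type*} [CommRing R] {I : Type*} (TS : TensorSystem R I)

lemma N01 (a b c : I) : TS.N a b c = 0 ∨ TS.N a b c = 1 := by
  have := TS.N_le_one a b c; omega

lemma F_zero₁ {a b c d e f : I} (h : TS.N a b e = 0) : TS.F a b c d e f = 0 :=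
  TS.F_vanish a b c d e f (by simp [h])
lemma F_zero₂ {a b c d e f : I} (h : TS.N b c f = 0) : TS.F a b c d e f = 0 :=
  TS.F_vanish a b c d e f (by simp [h])
lemma F_zero₃ {a b c d e f : I} (h : TS.N a f d = 0) : TS.F a b c d e f = 0 :=
  TS.F_vanish a b c d e f (by simp [h])
lemma F_zero₄ {a b c d e f : I} (h : TS.N e c d = 0) : TS.F a b c d e f = 0 :=
  TS.F_vanish a b c d e f (by simp [h])
lemma Fbar_zero₁ {a b c d e f : I} (h : TS.N a b e = 0) : TS.Fbar a b c d f e = 0 :=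
  TS.Fbar_vanish a b c d e f (by simp [h])
lemma Fbar_zero₂ {a b c d e f : I} (h : TS.N b c f = 0) : TS.Fbar a b c d f e = 0 :=
  TS.Fbar_vanish a b c d e f (by simp [h])
lemma Fbar_zero₃ {a b c d e f : I} (h : TS.N a f d = 0) : TS.Fbar a b c d f e = 0 :=
  TS.Fbar_vanish a b c d e f (by simp [h])
lemma Fbar_zero₄ {a b c d e f : I} (h : TS.N e c d = 0) : TS.Fbar a b c d f e = 0 :=
  TS.Fbar_vanish a b c d e f (by simp [h])

lemma F_ne₁ {a b c d e f : I} (h : TS.F a b c d e f ≠ 0) : TS.N a b e = 1 :=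
  (TS.N01 a b e).resolve_left fun h0 => h (TS.F_zero₁ h0)
lemma F_ne₂ {a b c d e f : I} (h : TS.F a b c d e f ≠ 0) : TS.N b c f = 1 :=
  (TS.N01 b c f).resolve_left fun h0 => h (TS.F_zero₂ h0)
lemma F_ne₃ {a b c d e f : I} (h : TS.F a b c d e f ≠ 0) : TS.N a f d = 1 :=
  (TS.N01 a f d).resolve_left fun h0 => h (TS.F_zero₃ h0)
lemma F_ne₄ {a b c d e f : I} (h : TS.F a b c d e f ≠ 0) : TS.N e c d = 1 :=
  (TS.N01 e c d).resolve_left fun h0 => h (TS.F_zero₄ h0)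
lemma Fbar_ne₁ {a b c d e f : I} (h : TS.Fbar a b c d f e ≠ 0) : TS.N a b e = 1 :=
  (TS.N01 a b e).resolve_left fun h0 => h (TS.Fbar_zero₁ h0)
lemma Fbar_ne₂ {a b c d e f : I} (h : TS.Fbar a b c d f e ≠ 0) : TS.N b c f = 1 :=
  (TS.N01 b c f).resolve_left fun h0 => h (TS.Fbar_zero₂ h0)
lemma Fbar_ne₃ {a b c d e f : I} (h : TS.Fbar a b c d f e ≠ 0) : TS.N a f d = 1 :=
  (TS.N01 a f d).resolve_left fun h0 => h (TS.Fbar_zero₃ h0)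
lemma Fbar_ne₄ {a b c d e f : I} (h : TS.Fbar a b c d f e ≠ 0) : TS.N e c d = 1 :=
  (TS.N01 e c d).resolve_left fun h0 => h (TS.Fbar_zero₄ h0)

/-- the canonical finite support finset for fusion products -/
def nsupp (a b : I) : Finset I := (TS.N_finite a b).toFinset

lemma mem_nsupp {a b x : I} (h : TS.N a b x ≠ 0) : x ∈ TS.nsupp a b := by
  simpa [nsupp, Set.Finite.mem_toFinset, Function.mem_support] using h

end TensorSystem

section FinsumHelpers

variable {R : Type*} [CommRing R] {I : Type*}

lemma fin_eq_sum {f : I → R} {s : Finset I} (h : ∀ x, f x ≠ 0 → x ∈ s) :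
    ∑ᶠ x, f x = ∑ x ∈ s, f x :=
  finsum_eq_finset_sum_of_support_subset f fun x hx => h x hx

lemma fin_swap (F : I → I → R) (s t : Finset I)
    (hs : ∀ x y, F x y ≠ 0 → x ∈ s) (ht : ∀ x y, F x y ≠ 0 → y ∈ t) :
    ∑ᶠ x, ∑ᶠ y, F x y = ∑ᶠ y, ∑ᶠ x, F x y := by
  have h1 : (∑ᶠ x, ∑ᶠ y, F x y) = ∑ x ∈ s, ∑ y ∈ t, F x y := by
    rw [finsum_congr fun x => fin_eq_sum (ht x)]
    exact fin_eq_sum fun x hx => by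
      by_contra hxs
      exact hx (Finset.sum_eq_zero fun y _ => by
        by_contra hy; exact hxs (hs x y hy))
  have h2 : (∑ᶠ y, ∑ᶠ x, F x y) = ∑ y ∈ t, ∑ x ∈ s, F x y := by
    rw [finsum_congr fun y => fin_eq_sum (fun x hx => hs x y hx)]
    exact fin_eq_sum fun y hy => by
      by_contra hyt
      exact hy (Finset.sum_eq_zero fun x _ => by
        by_contra hx; exact hyt (ht x y hx))
  rw [h1, h2, Finset.sum_comm]

lemma fin_mul (c : R) (f : I → R) (s : Finset I) (h : ∀ x, f x ≠ 0 → x ∈ s) :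
    c * ∑ᶠ x, f x = ∑ᶠ x, c * f x := by
  rw [fin_eq_sum h, fin_eq_sum (f := fun x => c * f x) (s := s)
    (fun x hx => h x fun h0 => hx (by simp [h0])), Finset.mul_sum]

lemma absorbN {R : Type*} [CommRing R] {n : ℕ} (hn : n ≤ 1) {x : R} (h : n = 0 → x = 0) :
    (n : R) * x = x := by
  interval_cases n
  · rw [h rfl]; ring
  · ring

end FinsumHelpers

section FinsumHelpers2
variable {R : Type*} [CommRing R] {I : Type*}

lemma fin_mul' (f : I → R) (c : R) (s : Finset I) (h : ∀ x, f x ≠ 0 → x ∈ s) :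
    (∑ᶠ x, f x) * c = ∑ᶠ x, f x * c := by
  rw [fin_eq_sum h, fin_eq_sum (f := fun x => f x * c) (s := s)
    (fun x hx => h x fun h0 => hx (by simp [h0])), Finset.sum_mul]

lemma fin_eq_sum_nat {f : I → ℕ} {s : Finset I} (h : ∀ x, f x ≠ 0 → x ∈ s) :
    ∑ᶠ x, f x = ∑ x ∈ s, f x :=
  finsum_eq_finset_sum_of_support_subset f fun x hx => h x hx

end FinsumHelpers2

namespace TensorSystem

variable {R : Type*} [CommRing R] {I : Type*} (TS : TensorSystem R I)

lemma oneDim {b ν φ : I} (hone : (∑ᶠ x, TS.N b ν x) = 1) (hφ : TS.N b ν φ = 1) :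
    ∀ k, k ≠ φ → TS.N b ν k = 0 := by
  intro k hk
  by_contra h0
  have hsum : (∑ x ∈ TS.nsupp b ν, TS.N b ν x) = 1 := by
    rw [← fin_eq_sum_nat (fun x hx => TS.mem_nsupp hx)]; exact hone
  have hsub : {φ, k} ⊆ TS.nsupp b ν := by
    intro x hx
    rcases Finset.mem_insert.mp hx with h | h
    · exact TS.mem_nsupp (by rw [h, hφ]; omega)
    · exact TS.mem_nsupp (by rw [Finset.mem_singleton.mp h]; exact h0)
  have hle := Finset.sum_le_sum_of_subset hsub (f := TS.N b ν)
  rw [Finset.sum_pair (Ne.symm hk), hsum, hφ] at hle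
  omega

lemma penA (a b c d e g h k l : I) :
    TS.F a h d e g k * TS.F b c d k h l
      = ∑ᶠ f', TS.Fbar a b c g h f' * (TS.F f' c d e g l * TS.F a b l e f' k) := by
  symm
  have step1 : ∀ f' : I,
      TS.Fbar a b c g h f' * (TS.F f' c d e g l * TS.F a b l e f' k)
        = ∑ᶠ h', (TS.Fbar a b c g h f' * TS.F a b c g f' h') *
            (TS.F a h' d e g k * TS.F b c d k h' l) := by
    intro f'
    rw [← TS.pentagon a b c d e f' g k l,
      fin_mul (TS.Fbar a b c g h f') _ (TS.nsupp b c) (fun h' hne => TS.mem_nsupp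
        (fun h0 => hne (by simp [TS.F_zero₂ (d := g) h0])))]
    exact finsum_congr fun h' => by ring
  rw [finsum_congr step1,
    fin_swap _ (TS.nsupp a b) (TS.nsupp b c)
      (fun f' h' hne => TS.mem_nsupp (fun h0 => hne (by simp [TS.Fbar_zero₁ (c := c) (d := g) (f := h) h0])))
      (fun f' h' hne => TS.mem_nsupp (fun h0 => hne (by simp [TS.F_zero₂ (d := g) h0])))]
  have step2 : ∀ h' : I,
      (∑ᶠ f', (TS.Fbar a b c g h f' * TS.F a b c g f' h') *
        (TS.F a h' d e g k * TS.F b c d k h' l))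
      = ((if h' = h then (1:R) else 0) * (TS.N b c h' : R) * (TS.N a h' g : R)) *
        (TS.F a h' d e g k * TS.F b c d k h' l) := by
    intro h'
    rw [← fin_mul' _ _ (TS.nsupp a b)
      (fun f' hne => TS.mem_nsupp (fun h0 => hne (by simp [TS.Fbar_zero₁ (c := c) (d := g) (f := h) h0]))),
      TS.Fbar_F a b c g h' h]
  rw [finsum_congr step2, finsum_eq_single _ h (fun x hx => by simp [if_neg hx]),
    if_pos rfl, one_mul, mul_assoc,
    absorbN (TS.N_le_one a h g) (fun h0 => by simp [TS.F_zero₁ (c := d) (d := e) h0]),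
    absorbN (TS.N_le_one b c h) (fun h0 => by simp [TS.F_zero₁ (c := d) (d := k) h0])]

end TensorSystem

namespace TensorSystem

variable {R : Type*} [CommRing R] {I : Type*} (TS : TensorSystem R I)

lemma penB (a b c d e f g h k : I) :
    TS.F a b c g f h * TS.F a h d e g k
      = ∑ᶠ l', (TS.F f c d e g l' * TS.F a b l' e f k) * TS.Fbar b c d k l' h := by
  symm
  have step1 : ∀ l' : I,
      (TS.F f c d e g l' * TS.F a b l' e f k) * TS.Fbar b c d k l' h
        = ∑ᶠ h', (TS.F a b c g f h' * TS.F a h' d e g k) *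
            (TS.F b c d k h' l' * TS.Fbar b c d k l' h) := by
    intro l'
    rw [← TS.pentagon a b c d e f g k l',
      fin_mul' _ (TS.Fbar b c d k l' h) (TS.nsupp b c) (fun h' hne => TS.mem_nsupp
        (fun h0 => hne (by simp [TS.F_zero₂ (d := g) h0])))]
    exact finsum_congr fun h' => by ring
  rw [finsum_congr step1,
    fin_swap _ (TS.nsupp c d) (TS.nsupp b c)
      (fun l' h' hne => TS.mem_nsupp (fun h0 => hne (by simp [TS.F_zero₂ (a := b) (d := k) h0])))
      (fun l' h' hne => TS.mem_nsupp (fun h0 => hne (by simp [TS.F_zero₂ (d := g) h0])))]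
  have step2 : ∀ h' : I,
      (∑ᶠ l', (TS.F a b c g f h' * TS.F a h' d e g k) *
        (TS.F b c d k h' l' * TS.Fbar b c d k l' h))
      = (TS.F a b c g f h' * TS.F a h' d e g k) *
          ((if h' = h then (1:R) else 0) * (TS.N b c h' : R) * (TS.N h' d k : R)) := by
    intro h'
    rw [← fin_mul _ _ (TS.nsupp c d)
      (fun l' hne => TS.mem_nsupp (fun h0 => hne (by simp [TS.F_zero₂ (a := b) (d := k) h0]))),
      TS.F_Fbar b c d k h' h]
  rw [finsum_congr step2, finsum_eq_single _ h (fun x hx => by simp [if_neg hx]),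
    if_pos rfl, one_mul, mul_comm, mul_assoc,
    absorbN (TS.N_le_one b c h) (fun h0 => by simp [TS.F_zero₂ (d := g) h0]),
    absorbN (TS.N_le_one h d k) (fun h0 => by simp [TS.F_zero₂ (a := a) (b := h) (d := e) h0])]

lemma penC (a b c d e f h k l₀ : I) :
    (∑ᶠ g', TS.Fbar f c d e l₀ g' * (TS.F a b c g' f h * TS.F a h d e g' k))
      = TS.F a b l₀ e f k * TS.Fbar b c d k l₀ h := by
  have step1 : ∀ g' : I,
      TS.Fbar f c d e l₀ g' * (TS.F a b c g' f h * TS.F a h d e g' k)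
        = ∑ᶠ l', (TS.Fbar f c d e l₀ g' * TS.F f c d e g' l') *
            (TS.F a b l' e f k * TS.Fbar b c d k l' h) := by
    intro g'
    rw [TS.penB a b c d e f g' h k,
      fin_mul (TS.Fbar f c d e l₀ g') _ (TS.nsupp c d) (fun l' hne => TS.mem_nsupp
        (fun h0 => hne (by simp [TS.F_zero₂ (a := f) (b := c) (d := e) h0])))]
    exact finsum_congr fun l' => by ring
  rw [finsum_congr step1,
    fin_swap _ (TS.nsupp f c) (TS.nsupp c d)
      (fun g' l' hne => TS.mem_nsupp (fun h0 => hne (by simp [TS.Fbar_zero₁ (d := e) (f := l₀) h0])))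
      (fun g' l' hne => TS.mem_nsupp (fun h0 => hne (by simp [TS.F_zero₂ (a := f) (b := c) (d := e) h0])))]
  have step2 : ∀ l' : I,
      (∑ᶠ g', (TS.Fbar f c d e l₀ g' * TS.F f c d e g' l') *
        (TS.F a b l' e f k * TS.Fbar b c d k l' h))
      = ((if l' = l₀ then (1:R) else 0) * (TS.N c d l' : R) * (TS.N f l' e : R)) *
          (TS.F a b l' e f k * TS.Fbar b c d k l' h) := by
    intro l'
    rw [← fin_mul' _ _ (TS.nsupp f c)
      (fun g' hne => TS.mem_nsupp (fun h0 => hne (by simp [TS.Fbar_zero₁ (d := e) (f := l₀) h0]))),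
      TS.Fbar_F f c d e l' l₀]
  rw [finsum_congr step2, finsum_eq_single _ l₀ (fun x hx => by simp [if_neg hx]),
    if_pos rfl, one_mul, mul_assoc,
    absorbN (TS.N_le_one c d l₀) (fun h0 => by simp [TS.Fbar_zero₂ (a := b) (d := k) (e := h) h0]),
    absorbN (TS.N_le_one f l₀ e) (fun h0 => by simp [TS.F_zero₄ (a := a) (b := b) (f := k) h0])]

lemma penD (a a₀ b c d e g h l : I) :
    (∑ᶠ k', (TS.F a h d e g k' * TS.F b c d k' h l) * TS.Fbar a b l e k' a₀)
      = TS.Fbar a b c g h a₀ * TS.F a₀ c d e g l := by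
  have step1 : ∀ k' : I,
      (TS.F a h d e g k' * TS.F b c d k' h l) * TS.Fbar a b l e k' a₀
        = ∑ᶠ f', (TS.Fbar a b c g h f' * TS.F f' c d e g l) *
            (TS.F a b l e f' k' * TS.Fbar a b l e k' a₀) := by
    intro k'
    rw [TS.penA a b c d e g h k' l,
      fin_mul' _ (TS.Fbar a b l e k' a₀) (TS.nsupp a b) (fun f' hne => TS.mem_nsupp
        (fun h0 => hne (by simp [TS.Fbar_zero₁ (c := c) (d := g) (f := h) h0])))]
    exact finsum_congr fun f' => by ring
  rw [finsum_congr step1,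
    fin_swap _ (TS.nsupp b l) (TS.nsupp a b)
      (fun k' f' hne => TS.mem_nsupp (fun h0 => hne (by simp [TS.Fbar_zero₂ (d := e) (e := a₀) h0])))
      (fun k' f' hne => TS.mem_nsupp (fun h0 => hne (by simp [TS.Fbar_zero₁ (c := c) (d := g) (f := h) h0])))]
  have step2 : ∀ f' : I,
      (∑ᶠ k', (TS.Fbar a b c g h f' * TS.F f' c d e g l) *
        (TS.F a b l e f' k' * TS.Fbar a b l e k' a₀))
      = (TS.Fbar a b c g h f' * TS.F f' c d e g l) *
          ((if f' = a₀ then (1:R) else 0) * (TS.N a b f' : R) * (TS.N f' l e : R)) := by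
    intro f'
    rw [← fin_mul _ _ (TS.nsupp b l)
      (fun k' hne => TS.mem_nsupp (fun h0 => hne (by simp [TS.F_zero₂ (a := a) (b := b) (d := e) h0]))),
      TS.F_Fbar a b l e f' a₀]
  rw [finsum_congr step2, finsum_eq_single _ a₀ (fun x hx => by simp [if_neg hx]),
    if_pos rfl, one_mul, mul_comm, mul_assoc,
    absorbN (TS.N_le_one a b a₀) (fun h0 => by simp [TS.Fbar_zero₁ (c := c) (d := g) (f := h) h0]),
    absorbN (TS.N_le_one a₀ l e) (fun h0 => by simp [TS.F_zero₃ (b := c) (c := d) h0])]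

lemma penE (a a₀ b c d e h k₀ l : I) :
    (∑ᶠ g', TS.Fbar a h d e k₀ g' * (TS.Fbar a b c g' h a₀ * TS.F a₀ c d e g' l))
      = TS.F b c d k₀ h l * TS.Fbar a b l e k₀ a₀ := by
  have step1 : ∀ g' : I,
      TS.Fbar a h d e k₀ g' * (TS.Fbar a b c g' h a₀ * TS.F a₀ c d e g' l)
        = ∑ᶠ k', (TS.Fbar a h d e k₀ g' * TS.F a h d e g' k') *
            (TS.F b c d k' h l * TS.Fbar a b l e k' a₀) := by
    intro g'
    rw [← TS.penD a a₀ b c d e g' h l,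
      fin_mul (TS.Fbar a h d e k₀ g') _ (TS.nsupp h d) (fun k' hne => TS.mem_nsupp
        (fun h0 => hne (by simp [TS.F_zero₂ (a := a) (b := h) (d := e) h0])))]
    exact finsum_congr fun k' => by ring
  rw [finsum_congr step1,
    fin_swap _ (TS.nsupp a h) (TS.nsupp h d)
      (fun g' k' hne => TS.mem_nsupp (fun h0 => hne (by simp [TS.Fbar_zero₁ (c := d) (d := e) (f := k₀) h0])))
      (fun g' k' hne => TS.mem_nsupp (fun h0 => hne (by simp [TS.F_zero₂ (a := a) (b := h) (d := e) h0])))]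
  have step2 : ∀ k' : I,
      (∑ᶠ g', (TS.Fbar a h d e k₀ g' * TS.F a h d e g' k') *
        (TS.F b c d k' h l * TS.Fbar a b l e k' a₀))
      = ((if k' = k₀ then (1:R) else 0) * (TS.N h d k' : R) * (TS.N a k' e : R)) *
          (TS.F b c d k' h l * TS.Fbar a b l e k' a₀) := by
    intro k'
    rw [← fin_mul' _ _ (TS.nsupp a h)
      (fun g' hne => TS.mem_nsupp (fun h0 => hne (by simp [TS.Fbar_zero₁ (c := d) (d := e) (f := k₀) h0]))),
      TS.Fbar_F a h d e k' k₀]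
  rw [finsum_congr step2, finsum_eq_single _ k₀ (fun x hx => by simp [if_neg hx]),
    if_pos rfl, one_mul, mul_assoc,
    absorbN (TS.N_le_one h d k₀) (fun h0 => by simp [TS.F_zero₄ (a := b) (b := c) (f := l) h0]),
    absorbN (TS.N_le_one a k₀ e) (fun h0 => by simp [TS.Fbar_zero₃ (b := b) (c := l) (e := a₀) h0])]

lemma recon (a b c d e f g₀ h l₀ : I) :
    TS.Fbar f c d e l₀ g₀ * TS.F a b c g₀ f h
      = ∑ᶠ k', (∑ᶠ g', (TS.Fbar f c d e l₀ g' * TS.F a b c g' f h) * TS.F a h d e g' k') *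
          TS.Fbar a h d e k' g₀ := by
  symm
  have step1 : ∀ k' : I,
      (∑ᶠ g', (TS.Fbar f c d e l₀ g' * TS.F a b c g' f h) * TS.F a h d e g' k') *
          TS.Fbar a h d e k' g₀
        = ∑ᶠ g', (TS.Fbar f c d e l₀ g' * TS.F a b c g' f h) *
            (TS.F a h d e g' k' * TS.Fbar a h d e k' g₀) := by
    intro k'
    rw [fin_mul' _ (TS.Fbar a h d e k' g₀) (TS.nsupp f c) (fun g' hne => TS.mem_nsupp
      (fun h0 => hne (by simp [TS.Fbar_zero₁ (d := e) (f := l₀) h0])))]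
    exact finsum_congr fun g' => by ring
  rw [finsum_congr step1,
    fin_swap _ (TS.nsupp h d) (TS.nsupp f c)
      (fun k' g' hne => TS.mem_nsupp (fun h0 => hne (by simp [TS.F_zero₂ (a := a) (b := h) (d := e) h0])))
      (fun k' g' hne => TS.mem_nsupp (fun h0 => hne (by simp [TS.Fbar_zero₁ (d := e) (f := l₀) h0])))]
  have step2 : ∀ g' : I,
      (∑ᶠ k', (TS.Fbar f c d e l₀ g' * TS.F a b c g' f h) *
        (TS.F a h d e g' k' * TS.Fbar a h d e k' g₀))
      = (TS.Fbar f c d e l₀ g' * TS.F a b c g' f h) *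
          ((if g' = g₀ then (1:R) else 0) * (TS.N a h g' : R) * (TS.N g' d e : R)) := by
    intro g'
    rw [← fin_mul _ _ (TS.nsupp h d)
      (fun k' hne => TS.mem_nsupp (fun h0 => hne (by simp [TS.F_zero₂ (a := a) (b := h) (d := e) h0]))),
      TS.F_Fbar a h d e g' g₀]
  rw [finsum_congr step2, finsum_eq_single _ g₀ (fun x hx => by simp [if_neg hx]),
    if_pos rfl, one_mul, mul_comm, mul_assoc,
    absorbN (TS.N_le_one a h g₀) (fun h0 => by simp [TS.F_zero₃ (b := b) (c := c) h0]),
    absorbN (TS.N_le_one g₀ d e) (fun h0 => by simp [TS.Fbar_zero₄ (a := f) (b := c) (f := l₀) h0])]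

end TensorSystem

namespace TensorSystem

variable {R : Type*} [CommRing R] {I : Type*} (TS : TensorSystem R I)

lemma core (a b c d e f h ν φ a₀ μi μ'i : I)
    (hf : TS.N a b f = 1)
    (hone : (∑ᶠ x, TS.N b ν x) = 1) (hφ : TS.N b ν φ = 1) :
    TS.Fbar a₀ c d e ν μ'i *
      (∑ᶠ g, TS.F a₀ c d e g ν * TS.Fbar a b c g h a₀ * TS.F a b c g f h * TS.Fbar f c d e ν g) *
      TS.F f c d e μi ν
    = (TS.F b c d φ h ν * TS.Fbar b c d φ ν h) *
        ((if f = a₀ then (1:R) else 0) * (TS.Fbar f c d e ν μ'i * TS.F f c d e μi ν)) := by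
  have hzero : ∀ k, k ≠ φ → TS.N b ν k = 0 := TS.oneDim hone hφ
  set Y : I → R := fun k' =>
    ∑ᶠ g', (TS.Fbar f c d e ν g' * TS.F a b c g' f h) * TS.F a h d e g' k' with hY
  have hS : (∑ᶠ g, TS.F a₀ c d e g ν * TS.Fbar a b c g h a₀ * TS.F a b c g f h *
        TS.Fbar f c d e ν g)
      = (TS.F a b ν e f φ * TS.Fbar b c d φ ν h) *
          (TS.F b c d φ h ν * TS.Fbar a b ν e φ a₀) := by
    have e1 : ∀ g : I, TS.F a₀ c d e g ν * TS.Fbar a b c g h a₀ * TS.F a b c g f h *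
          TS.Fbar f c d e ν g
        = ∑ᶠ k', (TS.F a₀ c d e g ν * TS.Fbar a b c g h a₀) *
            (Y k' * TS.Fbar a h d e k' g) := by
      intro g
      have : TS.F a₀ c d e g ν * TS.Fbar a b c g h a₀ * TS.F a b c g f h *
            TS.Fbar f c d e ν g
          = (TS.F a₀ c d e g ν * TS.Fbar a b c g h a₀) *
              (TS.Fbar f c d e ν g * TS.F a b c g f h) := by ring
      rw [this, TS.recon a b c d e f g h ν,
        fin_mul _ _ (TS.nsupp h d) (fun k' hne => TS.mem_nsupp (fun h0 => hne
          (by simp [TS.Fbar_zero₂ (a := a) (b := h) (d := e) (e := g) h0])))]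
    rw [finsum_congr e1,
      fin_swap _ (TS.nsupp a₀ c) (TS.nsupp h d)
        (fun g k' hne => TS.mem_nsupp (fun h0 => hne
          (by simp [TS.F_zero₁ (c := d) (d := e) (f := ν) h0])))
        (fun g k' hne => TS.mem_nsupp (fun h0 => hne
          (by simp [TS.Fbar_zero₂ (a := a) (b := h) (d := e) (e := g) h0])))]
    have e2 : ∀ k' : I,
        (∑ᶠ g, (TS.F a₀ c d e g ν * TS.Fbar a b c g h a₀) * (Y k' * TS.Fbar a h d e k' g))
          = Y k' * (TS.F b c d k' h ν * TS.Fbar a b ν e k' a₀) := by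
      intro k'
      rw [← TS.penE a a₀ b c d e h k' ν,
        fin_mul (Y k') _ (TS.nsupp a₀ c) (fun g hne => TS.mem_nsupp (fun h0 => hne
          (by simp [TS.F_zero₁ (c := d) (d := e) (f := ν) h0])))]
      exact finsum_congr fun g => by ring
    rw [finsum_congr e2]
    have e3 : ∀ k' : I, Y k' = TS.F a b ν e f k' * TS.Fbar b c d k' ν h := by
      intro k'
      rw [hY, ← TS.penC a b c d e f h k' ν]
      exact finsum_congr fun g' => by ring
    have e4 : ∀ k' : I, Y k' * (TS.F b c d k' h ν * TS.Fbar a b ν e k' a₀)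
        = (TS.F a b ν e f k' * TS.Fbar b c d k' ν h) *
            (TS.F b c d k' h ν * TS.Fbar a b ν e k' a₀) := fun k' => by rw [e3]
    rw [finsum_congr e4]
    refine finsum_eq_single _ φ fun x hx => ?_
    have : TS.F a b ν e f x = 0 := TS.F_zero₂ (d := e) (hzero x hx)
    simp [this]
  have hK : TS.F a b ν e f φ * TS.Fbar a b ν e φ a₀
      = (if f = a₀ then (1:R) else 0) * (TS.N a b f : R) * (TS.N f ν e : R) := by
    have hsingle : (∑ᶠ k', TS.F a b ν e f k' * TS.Fbar a b ν e k' a₀)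
        = TS.F a b ν e f φ * TS.Fbar a b ν e φ a₀ :=
      finsum_eq_single (fun k' => TS.F a b ν e f k' * TS.Fbar a b ν e k' a₀) φ
        (fun x hx => by simp [TS.F_zero₂ (d := e) (hzero x hx)])
    rw [← hsingle, TS.F_Fbar a b ν e f a₀]
  calc TS.Fbar a₀ c d e ν μ'i *
      (∑ᶠ g, TS.F a₀ c d e g ν * TS.Fbar a b c g h a₀ * TS.F a b c g f h * TS.Fbar f c d e ν g) *
      TS.F f c d e μi ν
      = (TS.F b c d φ h ν * TS.Fbar b c d φ ν h) *
          ((TS.F a b ν e f φ * TS.Fbar a b ν e φ a₀) *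
            (TS.Fbar a₀ c d e ν μ'i * TS.F f c d e μi ν)) := by rw [hS]; ring
    _ = (TS.F b c d φ h ν * TS.Fbar b c d φ ν h) *
          (((if f = a₀ then (1:R) else 0) * (TS.N a b f : R) * (TS.N f ν e : R)) *
            (TS.Fbar a₀ c d e ν μ'i * TS.F f c d e μi ν)) := by rw [hK]
    _ = (TS.F b c d φ h ν * TS.Fbar b c d φ ν h) *
        ((if f = a₀ then (1:R) else 0) * (TS.Fbar f c d e ν μ'i * TS.F f c d e μi ν)) := by
        rw [hf, Nat.cast_one, mul_one]
        by_cases hfa : f = a₀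
        · subst hfa
          rw [if_pos rfl, one_mul, one_mul,
            absorbN (TS.N_le_one f ν e) (fun h0 => by
              simp [TS.F_zero₃ (b := c) (c := d) h0])]
        · simp [if_neg hfa]

end TensorSystem

section Bookkeeping

variable {R : Type*} [CommRing R] {I : Type*}

lemma delta_prod_eq {L : ℕ} (k : Fin (L+1)) (μ' μ : Fin (L+1) → I) :
    (∏ j ∈ Finset.univ.erase k, if μ j = μ' j then (1:R) else 0)
      = if (∀ j, j ≠ k → μ j = μ' j) then (1:R) else 0 := by
  by_cases h : ∀ j, j ≠ k → μ j = μ' j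
  · rw [if_pos h]
    exact Finset.prod_eq_one fun j hj => if_pos (h j (Finset.mem_erase.mp hj).1)
  · rw [if_neg h]
    push_neg at h
    obtain ⟨j, hj, hne⟩ := h
    exact Finset.prod_eq_zero (Finset.mem_erase.mpr ⟨hj, Finset.mem_univ j⟩) (if_neg hne)

lemma collapse_line {L : ℕ} (k : Fin (L+1)) (μbase : Fin (L+1) → I)
    (f : (Fin (L+1) → I) → R) (S : Set (Fin (L+1) → I))
    (hline : ∀ β, f β ≠ 0 → ∀ j, j ≠ k → β j = μbase j)
    (hpath : ∀ b, f (Function.update μbase k b) ≠ 0 → Function.update μbase k b ∈ S) :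
    (∑ᶠ β ∈ S, f β) = ∑ᶠ b, f (Function.update μbase k b) := by
  have hrange : ∀ β, f β ≠ 0 → β ∈ Set.range (Function.update μbase k) := by
    intro β hβ
    refine ⟨β k, ?_⟩
    funext j
    by_cases hj : j = k
    · subst hj; rw [Function.update_self]
    · rw [Function.update_of_ne hj]; exact (hline β hβ j hj).symm
  rw [finsum_mem_inter_support_eq' f S (Set.range (Function.update μbase k))
      (fun x hx => ⟨fun _ => hrange x hx, fun hr => by
        obtain ⟨b, rfl⟩ := hr
        exact hpath b hx⟩),
    finsum_mem_range (Function.update_injective μbase k)]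

end Bookkeeping



/-- if `ν` acts one-dimensionally on the right of `λ_{i-1}` then
`p_i^{(ν)} p_{i-1}^{(ν')} p_i^{(ν)}` is the stated multiple of `p_i^{(ν)}`. -/
theorem TL_like_from_one_dim_right
    {R : Type*} [CommRing R] {I : Type*}
    (TS : TensorSystem R I) (L : ℕ) (I0 : Set I) (hI0 : I0.Finite)
    (lam : ℕ → I) (ν : I) (i : ℕ) (hi : 2 ≤ i) (hiL : i + 1 ≤ L)
    (hone : TS.ActsOneDimRight ν (lam (i - 1)))
    (φ : I) (hφ : TS.N (lam (i - 1)) ν φ = 1) (ν' : I) :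
    TS.MatEqOn L I0 lam
      (TS.mulMat L I0 lam
      (TS.pMat L lam (i) ν)
      (TS.mulMat L I0 lam
      (TS.pMat L lam (i - 1) ν')
      (TS.pMat L lam (i) ν)))
      (smulMat (TS.F (lam (i - 1)) (lam i) (lam (i + 1)) φ ν' ν
          * TS.Fbar (lam (i - 1)) (lam i) (lam (i + 1)) φ ν ν')
        (TS.pMat L lam (i) ν)) := by
  
  intro μ' μ hp' hp
  have hv : ∀ k : ℕ, k ≤ L → (((k : ℕ) : Fin (L + 1)) : ℕ) = k := by
    intro k hk
    rw [Fin.val_natCast]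
    exact Nat.mod_eq_of_lt (by omega)
  have hne : ∀ k l : ℕ, k ≤ L → l ≤ L → k ≠ l →
      ((k : ℕ) : Fin (L + 1)) ≠ ((l : ℕ) : Fin (L + 1)) := by
    intro k l hk hl hkl h
    apply hkl
    have h2 := congrArg Fin.val h
    rwa [hv k hk, hv l hl] at h2
  have hsub1 : i - 1 - 1 = i - 2 := by omega
  have hsub2 : i - 1 + 1 = i := by omega
  -- updating a path at position i stays a path
  have path_upd : ∀ τ : Fin (L + 1) → I, TS.IsPath L I0 lam τ →
      ∀ b : I, TS.N (τ ((i - 1 : ℕ) : Fin (L + 1))) (lam i) b = 1 →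
        TS.N b (lam (i + 1)) (τ ((i + 1 : ℕ) : Fin (L + 1))) = 1 →
        TS.IsPath L I0 lam (Function.update τ ((i : ℕ) : Fin (L + 1)) b) := by
    intro τ hτ b h1 h2
    constructor
    · rw [Function.update_of_ne (a := (0 : Fin (L + 1)))]
      · exact hτ.1
      · intro h0
        have h3 := congrArg Fin.val h0
        rw [hv i (by omega), Fin.val_zero] at h3
        omega
    · intro j hj1 hjL
      by_cases hji : j = i
      · subst hji
        rw [Function.update_self,
          Function.update_of_ne (hne (j - 1) j (by omega) (by omega) (by omega))]
        exact h1
      · by_cases hji1 : j = i + 1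
        · subst hji1
          rw [show i + 1 - 1 = i from by omega, Function.update_self,
            Function.update_of_ne (hne (i + 1) i (by omega) (by omega) (by omega))]
          exact h2
        · rw [Function.update_of_ne (hne (j - 1) i (by omega) (by omega) (by omega)),
            Function.update_of_ne (hne j i (by omega) (by omega) hji)]
          exact hτ.2 j hj1 hjL
  -- first collapse
  have step1 : TS.mulMat L I0 lam (TS.pMat L lam i ν)
      (TS.mulMat L I0 lam (TS.pMat L lam (i - 1) ν') (TS.pMat L lam i ν)) μ' μ
      = ∑ᶠ b, TS.pMat L lam i ν μ' (Function.update μ' ((i : ℕ) : Fin (L + 1)) b) *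
          (TS.mulMat L I0 lam (TS.pMat L lam (i - 1) ν') (TS.pMat L lam i ν))
            (Function.update μ' ((i : ℕ) : Fin (L + 1)) b) μ := by
    refine collapse_line ((i : ℕ) : Fin (L + 1)) μ'
      (fun α => TS.pMat L lam i ν μ' α *
        (TS.mulMat L I0 lam (TS.pMat L lam (i - 1) ν') (TS.pMat L lam i ν)) α μ)
      {x | TS.IsPath L I0 lam x} ?_ ?_
    · intro β hβ j hj
      have h1 : TS.pMat L lam i ν μ' β ≠ 0 := left_ne_zero_of_mul hβ
      have h2 : (∏ j ∈ Finset.univ.erase ((i : ℕ) : Fin (L + 1)),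
          if β j = μ' j then (1:R) else 0) ≠ 0 := by
        intro h0
        apply h1
        simp only [TensorSystem.pMat, h0, zero_mul]
      rw [delta_prod_eq] at h2
      by_contra hc
      exact h2 (if_neg (fun hall => hc (hall j hj)))
    · intro b hb
      have h1 : TS.pMat L lam i ν μ' (Function.update μ' ((i : ℕ) : Fin (L + 1)) b) ≠ 0 :=
        left_ne_zero_of_mul hb
      have hF : TS.F (μ' ((i - 1 : ℕ) : Fin (L + 1))) (lam i) (lam (i + 1))
          (μ' ((i + 1 : ℕ) : Fin (L + 1))) b ν ≠ 0 := by
        intro h0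
        apply h1
        simp only [TensorSystem.pMat,
          Function.update_of_ne (hne (i - 1) i (by omega) (by omega) (by omega)),
          Function.update_of_ne (hne (i + 1) i (by omega) (by omega) (by omega)),
          Function.update_self, h0, mul_zero]
      exact path_upd μ' hp' b (TS.F_ne₁ hF) (TS.F_ne₄ hF)
  -- second collapse
  have step2 : ∀ α : Fin (L + 1) → I,
      (TS.mulMat L I0 lam (TS.pMat L lam (i - 1) ν') (TS.pMat L lam i ν)) α μ
      = ∑ᶠ b', TS.pMat L lam (i - 1) ν' α (Function.update μ ((i : ℕ) : Fin (L + 1)) b') *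
          TS.pMat L lam i ν (Function.update μ ((i : ℕ) : Fin (L + 1)) b') μ := by
    intro α
    refine collapse_line ((i : ℕ) : Fin (L + 1)) μ
      (fun β => TS.pMat L lam (i - 1) ν' α β * TS.pMat L lam i ν β μ)
      {x | TS.IsPath L I0 lam x} ?_ ?_
    · intro β hβ j hj
      have h1 : TS.pMat L lam i ν β μ ≠ 0 := right_ne_zero_of_mul hβ
      have h2 : (∏ j ∈ Finset.univ.erase ((i : ℕ) : Fin (L + 1)),
          if μ j = β j then (1:R) else 0) ≠ 0 := by
        intro h0
        apply h1
        simp only [TensorSystem.pMat, h0, zero_mul]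
      rw [delta_prod_eq] at h2
      by_contra hc
      exact h2 (if_neg (fun hall => hc (hall j hj).symm))
    · intro b' hb'
      have h1 : TS.pMat L lam i ν (Function.update μ ((i : ℕ) : Fin (L + 1)) b') μ ≠ 0 :=
        right_ne_zero_of_mul hb'
      have hFb : TS.Fbar (μ ((i - 1 : ℕ) : Fin (L + 1))) (lam i) (lam (i + 1))
          (μ ((i + 1 : ℕ) : Fin (L + 1))) ν b' ≠ 0 := by
        intro h0
        apply h1
        simp only [TensorSystem.pMat, Function.update_self, h0, zero_mul, mul_zero]
      exact path_upd μ hp b' (TS.Fbar_ne₁ hFb) (TS.Fbar_ne₄ hFb)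
  -- collapse the inner sum to b' = b
  have step3 : ∀ b : I,
      (∑ᶠ b', TS.pMat L lam (i - 1) ν' (Function.update μ' ((i : ℕ) : Fin (L + 1)) b)
            (Function.update μ ((i : ℕ) : Fin (L + 1)) b') *
          TS.pMat L lam i ν (Function.update μ ((i : ℕ) : Fin (L + 1)) b') μ)
      = TS.pMat L lam (i - 1) ν' (Function.update μ' ((i : ℕ) : Fin (L + 1)) b)
            (Function.update μ ((i : ℕ) : Fin (L + 1)) b) *
          TS.pMat L lam i ν (Function.update μ ((i : ℕ) : Fin (L + 1)) b) μ := by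
    intro b
    refine finsum_eq_single _ b fun b' hb' => ?_
    have h0 : TS.pMat L lam (i - 1) ν' (Function.update μ' ((i : ℕ) : Fin (L + 1)) b)
        (Function.update μ ((i : ℕ) : Fin (L + 1)) b') = 0 := by
      simp only [TensorSystem.pMat]
      rw [delta_prod_eq, if_neg, zero_mul, zero_mul]
      intro hall
      have h3 := hall ((i : ℕ) : Fin (L + 1))
        (hne i (i - 1) (by omega) (by omega) (by omega))
      rw [Function.update_self, Function.update_self] at h3
      exact hb' h3
    rw [h0, zero_mul]
  -- explicit expansions of the three pMat factors
  have exp1 : ∀ b : I, TS.pMat L lam i ν μ' (Function.update μ' ((i : ℕ) : Fin (L + 1)) b)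
      = TS.Fbar (μ' ((i - 1 : ℕ) : Fin (L + 1))) (lam i) (lam (i + 1))
          (μ' ((i + 1 : ℕ) : Fin (L + 1))) ν (μ' ((i : ℕ) : Fin (L + 1))) *
        TS.F (μ' ((i - 1 : ℕ) : Fin (L + 1))) (lam i) (lam (i + 1))
          (μ' ((i + 1 : ℕ) : Fin (L + 1))) b ν := by
    intro b
    have hcond : ∀ j, j ≠ ((i : ℕ) : Fin (L + 1)) →
        Function.update μ' ((i : ℕ) : Fin (L + 1)) b j = μ' j :=
      fun j hj => Function.update_of_ne hj b μ'
    simp only [TensorSystem.pMat,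
      Function.update_of_ne (hne (i - 1) i (by omega) (by omega) (by omega)),
      Function.update_of_ne (hne (i + 1) i (by omega) (by omega) (by omega)),
      Function.update_self]
    rw [delta_prod_eq, if_pos hcond, one_mul]
  have exp3 : ∀ b : I, TS.pMat L lam i ν (Function.update μ ((i : ℕ) : Fin (L + 1)) b) μ
      = TS.Fbar (μ ((i - 1 : ℕ) : Fin (L + 1))) (lam i) (lam (i + 1))
          (μ ((i + 1 : ℕ) : Fin (L + 1))) ν b *
        TS.F (μ ((i - 1 : ℕ) : Fin (L + 1))) (lam i) (lam (i + 1))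
          (μ ((i + 1 : ℕ) : Fin (L + 1))) (μ ((i : ℕ) : Fin (L + 1))) ν := by
    intro b
    have hcond : ∀ j, j ≠ ((i : ℕ) : Fin (L + 1)) →
        μ j = Function.update μ ((i : ℕ) : Fin (L + 1)) b j :=
      fun j hj => (Function.update_of_ne hj b μ).symm
    simp only [TensorSystem.pMat, Function.update_self]
    rw [delta_prod_eq, if_pos hcond, one_mul]
  have hiff : ∀ b : I, (∀ j, j ≠ ((i - 1 : ℕ) : Fin (L + 1)) →
      Function.update μ ((i : ℕ) : Fin (L + 1)) b j
        = Function.update μ' ((i : ℕ) : Fin (L + 1)) b j)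
      ↔ (∀ j : Fin (L + 1), j ≠ ((i - 1 : ℕ) : Fin (L + 1)) →
          j ≠ ((i : ℕ) : Fin (L + 1)) → μ j = μ' j) := by
    intro b
    constructor
    · intro hcond j hj1 hj2
      have h3 := hcond j hj1
      rwa [Function.update_of_ne hj2, Function.update_of_ne hj2] at h3
    · intro h2 j hj1
      by_cases hj2 : j = ((i : ℕ) : Fin (L + 1))
      · subst hj2; rw [Function.update_self, Function.update_self]
      · rw [Function.update_of_ne hj2, Function.update_of_ne hj2]; exact h2 j hj1 hj2
  have exp2 : ∀ b : I, TS.pMat L lam (i - 1) ν' (Function.update μ' ((i : ℕ) : Fin (L + 1)) b)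
        (Function.update μ ((i : ℕ) : Fin (L + 1)) b)
      = (if (∀ j : Fin (L + 1), j ≠ ((i - 1 : ℕ) : Fin (L + 1)) →
            j ≠ ((i : ℕ) : Fin (L + 1)) → μ j = μ' j) then (1:R) else 0) *
          TS.Fbar (μ ((i - 2 : ℕ) : Fin (L + 1))) (lam (i - 1)) (lam i) b ν'
            (μ' ((i - 1 : ℕ) : Fin (L + 1))) *
          TS.F (μ ((i - 2 : ℕ) : Fin (L + 1))) (lam (i - 1)) (lam i) b
            (μ ((i - 1 : ℕ) : Fin (L + 1))) ν' := by
    intro b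
    simp only [TensorSystem.pMat]
    rw [hsub1, hsub2]
    simp only [Function.update_self,
      Function.update_of_ne (hne (i - 2) i (by omega) (by omega) (by omega)),
      Function.update_of_ne (hne (i - 1) i (by omega) (by omega) (by omega))]
    rw [delta_prod_eq, if_congr (hiff b) rfl rfl]
  -- assemble the single-sum expression
  have hterm : ∀ b : I,
      TS.pMat L lam i ν μ' (Function.update μ' ((i : ℕ) : Fin (L + 1)) b) *
        (TS.mulMat L I0 lam (TS.pMat L lam (i - 1) ν') (TS.pMat L lam i ν))
          (Function.update μ' ((i : ℕ) : Fin (L + 1)) b) μ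
      = (TS.Fbar (μ' ((i - 1 : ℕ) : Fin (L + 1))) (lam i) (lam (i + 1))
            (μ' ((i + 1 : ℕ) : Fin (L + 1))) ν (μ' ((i : ℕ) : Fin (L + 1))) *
          TS.F (μ' ((i - 1 : ℕ) : Fin (L + 1))) (lam i) (lam (i + 1))
            (μ' ((i + 1 : ℕ) : Fin (L + 1))) b ν) *
        (((if (∀ j : Fin (L + 1), j ≠ ((i - 1 : ℕ) : Fin (L + 1)) →
              j ≠ ((i : ℕ) : Fin (L + 1)) → μ j = μ' j) then (1:R) else 0) *
            TS.Fbar (μ ((i - 2 : ℕ) : Fin (L + 1))) (lam (i - 1)) (lam i) b ν'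
              (μ' ((i - 1 : ℕ) : Fin (L + 1))) *
            TS.F (μ ((i - 2 : ℕ) : Fin (L + 1))) (lam (i - 1)) (lam i) b
              (μ ((i - 1 : ℕ) : Fin (L + 1))) ν') *
          (TS.Fbar (μ ((i - 1 : ℕ) : Fin (L + 1))) (lam i) (lam (i + 1))
              (μ ((i + 1 : ℕ) : Fin (L + 1))) ν b *
            TS.F (μ ((i - 1 : ℕ) : Fin (L + 1))) (lam i) (lam (i + 1))
              (μ ((i + 1 : ℕ) : Fin (L + 1))) (μ ((i : ℕ) : Fin (L + 1))) ν)) := by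
    intro b
    rw [step2, step3 b, exp1 b, exp2 b, exp3 b]
  rw [step1, finsum_congr hterm]
  by_cases hEq2 : ∀ j : Fin (L + 1), j ≠ ((i - 1 : ℕ) : Fin (L + 1)) →
      j ≠ ((i : ℕ) : Fin (L + 1)) → μ j = μ' j
  · -- main case
    have hμ3 : μ ((i + 1 : ℕ) : Fin (L + 1)) = μ' ((i + 1 : ℕ) : Fin (L + 1)) :=
      hEq2 _ (hne (i + 1) (i - 1) (by omega) (by omega) (by omega))
        (hne (i + 1) i (by omega) (by omega) (by omega))
    have hterm2 : ∀ b : I,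
        (TS.Fbar (μ' ((i - 1 : ℕ) : Fin (L + 1))) (lam i) (lam (i + 1))
              (μ' ((i + 1 : ℕ) : Fin (L + 1))) ν (μ' ((i : ℕ) : Fin (L + 1))) *
            TS.F (μ' ((i - 1 : ℕ) : Fin (L + 1))) (lam i) (lam (i + 1))
              (μ' ((i + 1 : ℕ) : Fin (L + 1))) b ν) *
          (((if (∀ j : Fin (L + 1), j ≠ ((i - 1 : ℕ) : Fin (L + 1)) →
                j ≠ ((i : ℕ) : Fin (L + 1)) → μ j = μ' j) then (1:R) else 0) *
              TS.Fbar (μ ((i - 2 : ℕ) : Fin (L + 1))) (lam (i - 1)) (lam i) b ν'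
                (μ' ((i - 1 : ℕ) : Fin (L + 1))) *
              TS.F (μ ((i - 2 : ℕ) : Fin (L + 1))) (lam (i - 1)) (lam i) b
                (μ ((i - 1 : ℕ) : Fin (L + 1))) ν') *
            (TS.Fbar (μ ((i - 1 : ℕ) : Fin (L + 1))) (lam i) (lam (i + 1))
                (μ ((i + 1 : ℕ) : Fin (L + 1))) ν b *
              TS.F (μ ((i - 1 : ℕ) : Fin (L + 1))) (lam i) (lam (i + 1))
                (μ ((i + 1 : ℕ) : Fin (L + 1))) (μ ((i : ℕ) : Fin (L + 1))) ν))
        = TS.Fbar (μ' ((i - 1 : ℕ) : Fin (L + 1))) (lam i) (lam (i + 1))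
              (μ ((i + 1 : ℕ) : Fin (L + 1))) ν (μ' ((i : ℕ) : Fin (L + 1))) *
            ((TS.F (μ' ((i - 1 : ℕ) : Fin (L + 1))) (lam i) (lam (i + 1))
                (μ ((i + 1 : ℕ) : Fin (L + 1))) b ν *
              TS.Fbar (μ ((i - 2 : ℕ) : Fin (L + 1))) (lam (i - 1)) (lam i) b ν'
                (μ' ((i - 1 : ℕ) : Fin (L + 1))) *
              TS.F (μ ((i - 2 : ℕ) : Fin (L + 1))) (lam (i - 1)) (lam i) b
                (μ ((i - 1 : ℕ) : Fin (L + 1))) ν' *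
              TS.Fbar (μ ((i - 1 : ℕ) : Fin (L + 1))) (lam i) (lam (i + 1))
                (μ ((i + 1 : ℕ) : Fin (L + 1))) ν b) *
              TS.F (μ ((i - 1 : ℕ) : Fin (L + 1))) (lam i) (lam (i + 1))
                (μ ((i + 1 : ℕ) : Fin (L + 1))) (μ ((i : ℕ) : Fin (L + 1))) ν) := by
      intro b
      rw [if_pos hEq2, ← hμ3]
      ring
    rw [finsum_congr hterm2,
      ← fin_mul _ _ (TS.nsupp (μ' ((i - 1 : ℕ) : Fin (L + 1))) (lam i))
        (fun b hb => TS.mem_nsupp (fun h0 => hb (by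
          rw [TS.F_zero₁ (c := lam (i + 1)) (d := μ ((i + 1 : ℕ) : Fin (L + 1))) (f := ν) h0]
          ring))),
      ← fin_mul' _ _ (TS.nsupp (μ' ((i - 1 : ℕ) : Fin (L + 1))) (lam i))
        (fun b hb => TS.mem_nsupp (fun h0 => hb (by
          rw [TS.F_zero₁ (c := lam (i + 1)) (d := μ ((i + 1 : ℕ) : Fin (L + 1))) (f := ν) h0]
          ring))),
      ← mul_assoc]
    have hfpath : TS.N (μ ((i - 2 : ℕ) : Fin (L + 1))) (lam (i - 1))
        (μ ((i - 1 : ℕ) : Fin (L + 1))) = 1 := by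
      have h4 := hp.2 (i - 1) (by omega) (by omega)
      rwa [hsub1] at h4
    rw [TS.core (μ ((i - 2 : ℕ) : Fin (L + 1))) (lam (i - 1)) (lam i) (lam (i + 1))
      (μ ((i + 1 : ℕ) : Fin (L + 1))) (μ ((i - 1 : ℕ) : Fin (L + 1))) ν' ν φ
      (μ' ((i - 1 : ℕ) : Fin (L + 1))) (μ ((i : ℕ) : Fin (L + 1)))
      (μ' ((i : ℕ) : Fin (L + 1))) hfpath hone hφ]
    have hiff2 : (∀ j : Fin (L + 1), j ≠ ((i : ℕ) : Fin (L + 1)) → μ j = μ' j)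
        ↔ μ ((i - 1 : ℕ) : Fin (L + 1)) = μ' ((i - 1 : ℕ) : Fin (L + 1)) := by
      constructor
      · intro hall
        exact hall _ (hne (i - 1) i (by omega) (by omega) (by omega))
      · intro h1 j hj2
        by_cases hj1 : j = ((i - 1 : ℕ) : Fin (L + 1))
        · subst hj1; exact h1
        · exact hEq2 j hj1 hj2
    simp only [smulMat, TensorSystem.pMat]
    rw [delta_prod_eq, if_congr hiff2 rfl rfl]
    ring
  · -- degenerate case: some spectator index differs
    have hzero' : ∀ b : I,
        (TS.Fbar (μ' ((i - 1 : ℕ) : Fin (L + 1))) (lam i) (lam (i + 1))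
              (μ' ((i + 1 : ℕ) : Fin (L + 1))) ν (μ' ((i : ℕ) : Fin (L + 1))) *
            TS.F (μ' ((i - 1 : ℕ) : Fin (L + 1))) (lam i) (lam (i + 1))
              (μ' ((i + 1 : ℕ) : Fin (L + 1))) b ν) *
          (((if (∀ j : Fin (L + 1), j ≠ ((i - 1 : ℕ) : Fin (L + 1)) →
                j ≠ ((i : ℕ) : Fin (L + 1)) → μ j = μ' j) then (1:R) else 0) *
              TS.Fbar (μ ((i - 2 : ℕ) : Fin (L + 1))) (lam (i - 1)) (lam i) b ν'
                (μ' ((i - 1 : ℕ) : Fin (L + 1))) *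
              TS.F (μ ((i - 2 : ℕ) : Fin (L + 1))) (lam (i - 1)) (lam i) b
                (μ ((i - 1 : ℕ) : Fin (L + 1))) ν') *
            (TS.Fbar (μ ((i - 1 : ℕ) : Fin (L + 1))) (lam i) (lam (i + 1))
                (μ ((i + 1 : ℕ) : Fin (L + 1))) ν b *
              TS.F (μ ((i - 1 : ℕ) : Fin (L + 1))) (lam i) (lam (i + 1))
                (μ ((i + 1 : ℕ) : Fin (L + 1))) (μ ((i : ℕ) : Fin (L + 1))) ν)) = 0 := by
      intro b
      rw [if_neg hEq2]
      ring
    rw [finsum_congr hzero', finsum_zero]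
    push_neg at hEq2
    obtain ⟨j, hj1, hj2, hjne⟩ := hEq2
    simp only [smulMat, TensorSystem.pMat]
    rw [delta_prod_eq, if_neg (fun hall => hjne (hall j hj2))]
    ring
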